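/- Let q > 1 and a ≥ 2q, and define β* = (a/(q(a−1)))·(2√q − 1 − q/a). Then 0 < β* < 1. Moreover, for every β with 0 < β ≤ β*, defining M_0(v) = A_0 − B_0·v and R_0(v) = Ã_0 − B̃_0·v (with the quantities A_l, B_l, Ã_l, B̃_l evaluated at l = 0), and for each positive integer n the function Γ_0^{(n)}(v) = (M_0(v) + R_0(v)/a)·v / ((1−v)·(1−(1−v)^n)) on (β/q, β], one has limsup_{n→∞} sup_{v ∈ (β/q, β]} Γ_0^{(n)}(v) ≤ 1. -/

import Mathlib

open Finset Filter

/-- `A_l = β q^l (1+q) - (q/a+1) β + q/a`. -/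
noncomputable def Acoef (a q β : ℝ) (l : ℕ) : ℝ := β*q^l*(1 + q) - (q/a + 1)*β + q/a

/-- `B_l = q^{2l+1}`. -/
noncomputable def Bcoef (q : ℝ) (l : ℕ) : ℝ := q^(2*l+1)

/-- `Ã_l = β(q-1)((2-a/q)l + (l-1)l/2) + βq(l+2-a/q)`. -/
noncomputable def Atil (a q β : ℝ) (l : ℕ) : ℝ :=
  β*(q - 1)*((2 - a/q)*(l:ℝ) + ((l:ℝ) - 1)*(l:ℝ)/2) + β*q*((l:ℝ) + 2 - a/q)

/-- `B̃_l = q^{l+1}(l+2-a/q)`. -/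
noncomputable def Btil (a q : ℝ) (l : ℕ) : ℝ := q^(l+1)*((l:ℝ) + 2 - a/q)

lemma keyQ (s t : ℝ) (hs : 1 < s) (ht : 0 < t) (ht2 : t ≤ 1/2)
    (hH : 0 ≤ 2*s^3 - 2*s^2 - 2*s + 1 - 2*s^2*t + 6*s*t - t - 2*t^2) :
    0 ≤ 4*s^4 - 4*s^3 - 4*s^3*t - 4*s^2 + 8*s^2*t + 4*s - 4*s*t^2 - 1 - t^2 + 2*t^3 := by
  nlinarith [mul_nonneg hH (by linarith : (0:ℝ) ≤ 1 - t),
    mul_nonneg (mul_nonneg (by linarith : (0:ℝ) ≤ s - 1) ht.le) (by linarith : (0:ℝ) ≤ 1 - t),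
    mul_nonneg (sq_nonneg (s-1)) (mul_nonneg ht.le (by linarith : (0:ℝ) ≤ 1 - t)),
    mul_nonneg (mul_nonneg (mul_nonneg (by linarith : (0:ℝ) ≤ s-1) (by linarith : (0:ℝ) ≤ s-1)) (by linarith : (0:ℝ) ≤ s-1)) (by linarith : (0:ℝ) ≤ 1 - 2*t),
    pow_nonneg (by linarith : (0:ℝ) ≤ s-1) 3,
    pow_nonneg (by linarith : (0:ℝ) ≤ s-1) 4,
    sq_nonneg (s-1)]

lemma quadnn (D X v : ℝ) (hD : 0 < D) (hX2 : X^2 ≤ 4*D) : 0 ≤ D*v^2 - X*v + 1 := by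
  nlinarith [sq_nonneg (2*D*v - X)]

lemma pointwise (s t β v : ℝ) (hs : 1 < s) (ht : 0 < t) (ht2 : t ≤ 1/2)
    (hβ : 0 < β) (hβle : β*(s^2 - t) ≤ 2*s - 1 - t)
    (hv : 0 < v) (hvb : v ≤ β) :
    (β*(s^2 + t - 1) + t - (s^2 - 1 + 2*t)*v) * v ≤ 1 - v := by
  have hu : 0 < s^2 - t := by nlinarith
  have hβ1 : β < 1 := by nlinarith [sq_nonneg (s-1)]
  have hD : 0 < s^2 - 1 + 2*t := by nlinarith
  rcases le_or_gt (β*(s^2 - 1 + 3*t)) (1 + t) with hc | hc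
  · have h1 : 0 ≤ (β - v) * ((1 + t - β*(s^2 - 1 + 3*t)) + (s^2 - 1 + 2*t)*(β - v)) :=
      mul_nonneg (by linarith) (by nlinarith)
    have h2 : 0 ≤ (1 - β) * (1 - t*β) := mul_nonneg (by linarith) (by nlinarith)
    nlinarith [h1, h2]
  · have hE : 0 ≤ s^2 - 1 + t := by nlinarith
    have h3t : 0 < s^2 - 1 + 3*t := by nlinarith
    have hH : 0 ≤ 2*s^3 - 2*s^2 - 2*s + 1 - 2*s^2*t + 6*s*t - t - 2*t^2 := by
      nlinarith [mul_le_mul_of_nonneg_right hβle h3t.le, mul_lt_mul_of_pos_right hc hu]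
    have hQ := keyQ s t hs ht ht2 hH
    set X := β*(s^2 - 1 + t) + 1 + t with hXdef
    have hX0 : 0 < X := by nlinarith [mul_nonneg hβ.le hE]
    have hXu : X*(s^2 - t) ≤ (2*s - 1 - t)*(s^2 - 1 + t) + (1 + t)*(s^2 - t) := by
      nlinarith [mul_le_mul_of_nonneg_right hβle hE]
    have hP : ((2*s - 1 - t)*(s^2 - 1 + t) + (1 + t)*(s^2 - t))^2
        ≤ 4*(s^2 - 1 + 2*t)*(s^2 - t)^2 := by
      nlinarith [mul_nonneg (by linarith : (0:ℝ) ≤ 1 - 2*t) hQ]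
    have hXu2 : (X*(s^2 - t))^2 ≤ ((2*s - 1 - t)*(s^2 - 1 + t) + (1 + t)*(s^2 - t))^2 :=
      pow_le_pow_left₀ (mul_pos hX0 hu).le hXu 2
    have hX2 : X^2 ≤ 4*(s^2 - 1 + 2*t) := by
      have h := hXu2.trans hP
      have h' : X^2*(s^2 - t)^2 ≤ (4*(s^2 - 1 + 2*t))*(s^2 - t)^2 := by nlinarith [h]
      exact le_of_mul_le_mul_right h' (by positivity)
    have hgoal : 0 ≤ (s^2 - 1 + 2*t)*v^2 - X*v + 1 := quadnn _ _ _ hD hX2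
    rw [hXdef] at hgoal
    linarith [hgoal]

/-- With `β* = (a/(q(a-1)))(2√q - 1 - q/a)` one has `0 < β* < 1`, and
for every `0 < β ≤ β*` the functions
`Γ_0^{(n)}(v) = (M_0(v) + R_0(v)/a) v / ((1-v)(1-(1-v)^n))` on `(β/q, β]`
satisfy `limsup_{n→∞} sup_{v ∈ (β/q, β]} Γ_0^{(n)}(v) ≤ 1`. -/
theorem stmt_11
    (q a : ℝ) (hq : 1 < q) (ha : 2*q ≤ a)
    (βstar : ℝ) (hβstar : βstar = a/(q*(a - 1)) * (2*Real.sqrt q - 1 - q/a)) :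
    0 < βstar ∧ βstar < 1 ∧
    ∀ β : ℝ, 0 < β → β ≤ βstar →
      Filter.limsup (fun n : ℕ =>
          sSup ((fun v : ℝ =>
            ((Acoef a q β 0 - Bcoef q 0 * v) + (Atil a q β 0 - Btil a q 0 * v)/a) * v
              / ((1 - v) * (1 - (1 - v)^n))) '' Set.Ioc (β/q) β))
        Filter.atTop ≤ 1 := by
  have hq0 : 0 < q := lt_trans one_pos hq
  have ha0 : 0 < a := lt_of_lt_of_le (by linarith) ha
  have ha1 : 1 < a := by nlinarith
  set s := Real.sqrt q with hsdef
  have hs2 : s^2 = q := Real.sq_sqrt hq0.le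
  have hs1 : 1 < s := by
    nlinarith [Real.sqrt_nonneg q, hs2]
  set t := q/a with htdef
  have ht : 0 < t := div_pos hq0 ha0
  have ht2 : t ≤ 1/2 := by rw [htdef, div_le_iff₀ ha0]; linarith
  have hu : 0 < s^2 - t := by nlinarith
  have hβsu : βstar * (s^2 - t) = 2*s - 1 - t := by
    rw [hβstar, hs2, htdef]
    field_simp [hq0.ne', ha0.ne', sub_ne_zero.mpr ha1.ne']
  have hnum : 0 < 2*s - 1 - t := by nlinarith
  have hβs0 : 0 < βstar := by
    have := hβsu
    nlinarith
  have hβs1 : βstar < 1 := by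
    nlinarith [sq_nonneg (s-1)]
  refine ⟨hβs0, hβs1, ?_⟩
  intro β hβ0 hβle'
  have hβle : β*(s^2 - t) ≤ 2*s - 1 - t := by
    calc β*(s^2 - t) ≤ βstar*(s^2 - t) := by nlinarith
      _ = 2*s - 1 - t := hβsu
  have hβ1 : β < 1 := lt_of_le_of_lt hβle' hβs1
  have hβq0 : 0 < β/q := div_pos hβ0 hq0
  have hβqβ : β/q < β := div_lt_self hβ0 hq
  have hβq1 : β/q < 1 := hβqβ.trans hβ1
  set r := 1 - β/q with hrdef
  have hr0 : 0 < r := by simp only [hrdef]; linarith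
  have hr1 : r < 1 := by simp only [hrdef]; linarith
  -- numerator simplification
  have hnumeq : ∀ v : ℝ,
      ((Acoef a q β 0 - Bcoef q 0 * v) + (Atil a q β 0 - Btil a q 0 * v)/a) * v
        = (β*(s^2 + t - 1) + t - (s^2 - 1 + 2*t)*v) * v := by
    intro v
    simp only [Acoef, Bcoef, Atil, Btil, pow_zero, pow_one, Nat.cast_zero, hs2, htdef]
    field_simp
    ring
  -- pointwise bound on the numerator
  have hkey : ∀ v ∈ Set.Ioc (β/q) β,
      (β*(s^2 + t - 1) + t - (s^2 - 1 + 2*t)*v) * v ≤ 1 - v := by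
    intro v hv
    exact pointwise s t β v hs1 ht ht2 hβ0 hβle (hβq0.trans hv.1) hv.2
  -- upper bound for every element of the image
  have hub : ∀ n : ℕ, ∀ x ∈ ((fun v : ℝ =>
      ((Acoef a q β 0 - Bcoef q 0 * v) + (Atil a q β 0 - Btil a q 0 * v)/a) * v
        / ((1 - v) * (1 - (1 - v)^n))) '' Set.Ioc (β/q) β), x ≤ (1 - r^n)⁻¹ := by
    intro n x hx
    obtain ⟨v, hv, rfl⟩ := hx
    have hv0 : 0 < v := hβq0.trans hv.1
    have hv1 : v < 1 := lt_of_le_of_lt hv.2 hβ1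
    rcases Nat.eq_zero_or_pos n with h0 | hn
    · subst h0
      simp
    · have hvr : 1 - v ≤ r := by simp only [hrdef]; linarith [hv.1]
      have hrn1 : r^n < 1 := pow_lt_one₀ hr0.le hr1 hn.ne'
      have hrv : (1-v)^n ≤ r^n := pow_le_pow_left₀ (by linarith) hvr n
      have hd1 : 0 < 1 - (1-v)^n := by linarith
      have hd : 0 < (1-v)*(1-(1-v)^n) := mul_pos (by linarith) hd1
      have h2 : (1 - v) / ((1 - v) * (1 - (1 - v)^n)) = 1 / (1 - (1-v)^n) := by
        rw [div_mul_eq_div_div, div_self (ne_of_gt (by linarith : (0:ℝ) < 1 - v))]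
      calc ((Acoef a q β 0 - Bcoef q 0 * v) + (Atil a q β 0 - Btil a q 0 * v)/a) * v
            / ((1 - v) * (1 - (1 - v)^n))
          ≤ (1 - v) / ((1 - v) * (1 - (1 - v)^n)) :=
            (div_le_div_iff_of_pos_right hd).mpr (by rw [hnumeq v]; exact hkey v hv)
        _ = 1 / (1 - (1-v)^n) := h2
        _ ≤ 1 / (1 - r^n) := one_div_le_one_div_of_le (by linarith) (by linarith)
        _ = (1 - r^n)⁻¹ := one_div _
  have hbA : ∀ n : ℕ, BddAbove ((fun v : ℝ =>
      ((Acoef a q β 0 - Bcoef q 0 * v) + (Atil a q β 0 - Btil a q 0 * v)/a) * v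
        / ((1 - v) * (1 - (1 - v)^n))) '' Set.Ioc (β/q) β) :=
    fun n => ⟨(1 - r^n)⁻¹, fun x hx => hub n x hx⟩
  have hrle1 : ∀ n : ℕ, r^n ≤ 1 := fun n => pow_le_one₀ hr0.le hr1.le
  have hsup_le : ∀ n : ℕ, sSup ((fun v : ℝ =>
      ((Acoef a q β 0 - Bcoef q 0 * v) + (Atil a q β 0 - Btil a q 0 * v)/a) * v
        / ((1 - v) * (1 - (1 - v)^n))) '' Set.Ioc (β/q) β) ≤ (1 - r^n)⁻¹ :=
    fun n => Real.sSup_le (hub n) (inv_nonneg.mpr (by linarith [hrle1 n]))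
  -- lower bound (coboundedness)
  set Nβ : ℝ := ((Acoef a q β 0 - Bcoef q 0 * β) + (Atil a q β 0 - Btil a q 0 * β)/a) * β
    with hNβ
  set m : ℝ := -|Nβ| / ((1-β)*β) with hm
  have hb0 : 0 < (1-β)*β := mul_pos (by linarith) hβ0
  have hlow : ∀ n : ℕ, 1 ≤ n → m ≤ sSup ((fun v : ℝ =>
      ((Acoef a q β 0 - Bcoef q 0 * v) + (Atil a q β 0 - Btil a q 0 * v)/a) * v
        / ((1 - v) * (1 - (1 - v)^n))) '' Set.Ioc (β/q) β) := by
    intro n hn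
    have hβmem : β ∈ Set.Ioc (β/q) β := ⟨hβqβ, le_refl β⟩
    have hmem : Nβ / ((1 - β) * (1 - (1 - β)^n)) ∈ ((fun v : ℝ =>
        ((Acoef a q β 0 - Bcoef q 0 * v) + (Atil a q β 0 - Btil a q 0 * v)/a) * v
          / ((1 - v) * (1 - (1 - v)^n))) '' Set.Ioc (β/q) β) := ⟨β, hβmem, rfl⟩
    refine le_trans ?_ (le_csSup (hbA n) hmem)
    have hpow : (1-β)^n ≤ 1 - β := by
      have := pow_le_pow_of_le_one (by linarith : (0:ℝ) ≤ 1-β) (by linarith) hn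
      simpa using this
    have hd1 : 0 < 1 - (1-β)^n := by linarith
    have hdlb : (1-β)*β ≤ (1-β)*(1-(1-β)^n) :=
      mul_le_mul_of_nonneg_left (by linarith) (by linarith)
    have hd : 0 < (1-β)*(1-(1-β)^n) := lt_of_lt_of_le hb0 hdlb
    calc m = -|Nβ| / ((1-β)*β) := hm
      _ ≤ -|Nβ| / ((1-β)*(1-(1-β)^n)) := by
          rw [neg_div, neg_div, neg_le_neg_iff]
          exact div_le_div_of_nonneg_left (abs_nonneg _) hb0 hdlb
      _ ≤ Nβ / ((1-β)*(1-(1-β)^n)) :=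
          (div_le_div_iff_of_pos_right hd).mpr (neg_abs_le _)
  -- limit of the majorant
  have hc_tendsto : Tendsto (fun n : ℕ => (1 - r^n)⁻¹) atTop (nhds 1) := by
    have h0 : Tendsto (fun n : ℕ => r^n) atTop (nhds 0) :=
      tendsto_pow_atTop_nhds_zero_of_lt_one hr0.le hr1
    have h1 : Tendsto (fun n : ℕ => 1 - r^n) atTop (nhds 1) := by
      have := (tendsto_const_nhds : Tendsto (fun _ : ℕ => (1:ℝ)) atTop (nhds 1)).sub h0
      simpa using this
    have := h1.inv₀ (by norm_num)
    simpa using this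
  have hcob : IsCoboundedUnder (· ≤ ·) atTop (fun n : ℕ => sSup ((fun v : ℝ =>
      ((Acoef a q β 0 - Bcoef q 0 * v) + (Atil a q β 0 - Btil a q 0 * v)/a) * v
        / ((1 - v) * (1 - (1 - v)^n))) '' Set.Ioc (β/q) β)) := by
    apply Filter.IsBoundedUnder.isCoboundedUnder_le
    refine ⟨m, ?_⟩
    rw [Filter.eventually_map]
    filter_upwards [Filter.eventually_ge_atTop 1] with n hn
    exact hlow n hn
  have hbdd : IsBoundedUnder (· ≤ ·) atTop (fun n : ℕ => (1 - r^n)⁻¹) :=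
    hc_tendsto.isBoundedUnder_le
  calc Filter.limsup (fun n : ℕ => sSup ((fun v : ℝ =>
        ((Acoef a q β 0 - Bcoef q 0 * v) + (Atil a q β 0 - Btil a q 0 * v)/a) * v
          / ((1 - v) * (1 - (1 - v)^n))) '' Set.Ioc (β/q) β)) Filter.atTop
      ≤ Filter.limsup (fun n : ℕ => (1 - r^n)⁻¹) Filter.atTop :=
        Filter.limsup_le_limsup (Filter.Eventually.of_forall hsup_le) hcob hbdd
    _ = 1 := hc_tendsto.limsup_eq
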